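/- Fix $n \geq 2$ and let $\mathbb{S}^{n-1}$ be the unit sphere in $\mathbb{R}^n$. For $\rho \in C^1(\mathbb{S}^{n-1})$ with $\|\rho\|_{C^1} < \delta$ and $z = r_0 \omega_0 \in \mathbb{R}^n$ with $|z| < \varepsilon$, define $f_z(\rho, \omega) = \frac{(1+\rho(\omega))\omega + r_0 \omega_0}{|(1+\rho(\omega))\omega + r_0 \omega_0|}$ for $\omega \in \mathbb{S}^{n-1}$. Then there exist $\varepsilon > 0$ and $\delta > 0$ such that for all such $\rho$ and $z$, the map $\omega \mapsto f_z(\rho, \omega)$ is injective from $\mathbb{S}^{n-1}$ to $\mathbb{S}^{n-1}$. -/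

import Mathlib

open Real Set
open scoped RealInnerProductSpace

lemma unit_comb_norm {E : Type*} [NormedAddCommGroup E] [InnerProductSpace ℝ E]
    {x y : E} (hx : ‖x‖ = 1) (hy : ‖y‖ = 1) (hxy : ⟪x, y⟫ = 0)
    {p q : ℝ} (hpq : p ^ 2 + q ^ 2 = 1) : ‖p • x + q • y‖ = 1 := by
  have h : ‖p • x + q • y‖ ^ 2 = 1 := by
    rw [norm_add_sq_real, real_inner_smul_left, real_inner_smul_right, hxy, norm_smul, norm_smul,
      hx, hy]
    simp only [mul_zero, mul_one, Real.norm_eq_abs, mul_pow, sq_abs]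
    simpa using hpq
  have h2 : (‖p • x + q • y‖ - 1) * (‖p • x + q • y‖ + 1) = 0 := by linear_combination h
  rcases mul_eq_zero.1 h2 with h3 | h3
  · linarith
  · have := norm_nonneg (p • x + q • y); linarith

lemma sphere_lip {E : Type*} [NormedAddCommGroup E] [InnerProductSpace ℝ E]
    {ρ : E → ℝ} (hρ : ContDiff ℝ 1 ρ) {δ : ℝ}
    (hδ : ∀ ω : E, ‖ω‖ = 1 → ‖fderiv ℝ ρ ω‖ ≤ δ)
    {ω₁ ω₂ : E} (h1 : ‖ω₁‖ = 1) (h2 : ‖ω₂‖ = 1)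
    (hc : 0 < ⟪ω₁, ω₂⟫) :
    |ρ ω₂ - ρ ω₁| ≤ 2 * δ * ‖ω₂ - ω₁‖ := by
  have hδ0 : 0 ≤ δ := le_trans (norm_nonneg _) (hδ ω₁ h1)
  by_cases heq : ω₁ = ω₂
  · simp [heq]
  obtain ⟨c, hcdef⟩ : ∃ c : ℝ, ⟪ω₁, ω₂⟫ = c := ⟨_, rfl⟩
  rw [hcdef] at hc
  have hcle : c ≤ 1 := by
    have := real_inner_le_norm ω₁ ω₂; rw [h1, h2, one_mul, hcdef] at this; exact this
  have hc1 : c < 1 := by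
    rcases lt_or_eq_of_le hcle with h | h
    · exact h
    · exact absurd ((inner_eq_one_iff_of_norm_eq_one h1 h2).mp (hcdef.trans h)) heq
  set w : E := ω₂ - c • ω₁ with hwdef
  have hw2 : ‖w‖ ^ 2 = 1 - c ^ 2 := by
    rw [hwdef, norm_sub_sq_real, real_inner_smul_right, real_inner_comm ω₁ ω₂, hcdef,
      norm_smul, h2, h1]
    simp only [Real.norm_eq_abs, mul_pow, sq_abs]
    ring
  have hwpos : 0 < ‖w‖ := by nlinarith [norm_nonneg w, hw2]
  set v : E := ‖w‖⁻¹ • w with hvdef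
  have hv1 : ‖v‖ = 1 := by
    rw [hvdef, norm_smul, norm_inv, norm_norm]
    field_simp
  have hov : ⟪ω₁, v⟫ = 0 := by
    rw [hvdef, real_inner_smul_right, hwdef, inner_sub_right, real_inner_smul_right,
      real_inner_self_eq_norm_sq, h1, hcdef]
    ring
  obtain ⟨α, hαdef⟩ : ∃ α : ℝ, Real.arccos c = α := ⟨_, rfl⟩
  have hα0 : 0 < α := hαdef ▸ Real.arccos_pos.2 hc1
  have hα2 : α ≤ π / 2 := hαdef ▸ Real.arccos_le_pi_div_two.2 hc.le
  have hcos : Real.cos α = c := hαdef ▸ Real.cos_arccos (by linarith) hc1.le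
  have hsin : Real.sin α = ‖w‖ := by
    rw [← hαdef, Real.sin_arccos, ← hw2, Real.sqrt_sq (norm_nonneg w)]
  set γ : ℝ → E := fun θ => Real.cos θ • ω₁ + Real.sin θ • v with hγdef
  have hγ0 : γ 0 = ω₁ := by simp [hγdef]
  have hγα : γ α = ω₂ := by
    simp only [hγdef, hcos, hsin]
    rw [hvdef, smul_smul, mul_inv_cancel₀ hwpos.ne', one_smul, hwdef]
    abel
  have hγd : ∀ θ : ℝ, HasDerivAt γ ((-Real.sin θ) • ω₁ + Real.cos θ • v) θ := fun θ =>
    ((Real.hasDerivAt_cos θ).smul_const ω₁).add ((Real.hasDerivAt_sin θ).smul_const v)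
  have hγnorm : ∀ θ : ℝ, ‖γ θ‖ = 1 := fun θ =>
    unit_comb_norm h1 hv1 hov (by rw [Real.cos_sq_add_sin_sq])
  have hγdnorm : ∀ θ : ℝ, ‖(-Real.sin θ) • ω₁ + Real.cos θ • v‖ = 1 := fun θ =>
    unit_comb_norm h1 hv1 hov (by rw [neg_sq, Real.sin_sq_add_cos_sq])
  set F : ℝ → ℝ := fun θ => ρ (γ θ) with hFdef
  have hF : ∀ θ ∈ Icc (0:ℝ) α,
      HasDerivWithinAt F ((fderiv ℝ ρ (γ θ)) ((-Real.sin θ) • ω₁ + Real.cos θ • v))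
        (Icc (0:ℝ) α) θ := by
    intro θ _
    exact ((((hρ.differentiable one_ne_zero) (γ θ)).hasFDerivAt).comp_hasDerivAt θ
      (hγd θ)).hasDerivWithinAt
  have hbound : ∀ θ ∈ Ico (0:ℝ) α,
      ‖(fderiv ℝ ρ (γ θ)) ((-Real.sin θ) • ω₁ + Real.cos θ • v)‖ ≤ δ := by
    intro θ _
    calc ‖(fderiv ℝ ρ (γ θ)) ((-Real.sin θ) • ω₁ + Real.cos θ • v)‖
        ≤ ‖fderiv ℝ ρ (γ θ)‖ * ‖(-Real.sin θ) • ω₁ + Real.cos θ • v‖ :=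
          ContinuousLinearMap.le_opNorm _ _
      _ ≤ δ * 1 := by rw [hγdnorm θ]; exact mul_le_mul_of_nonneg_right (hδ _ (hγnorm θ)) one_pos.le
      _ = δ := mul_one δ
  have key := norm_image_sub_le_of_norm_deriv_le_segment' hF hbound α (right_mem_Icc.2 hα0.le)
  simp only [hFdef, hγα, hγ0, Real.norm_eq_abs, sub_zero] at key
  -- key : |ρ ω₂ - ρ ω₁| ≤ δ * α
  obtain ⟨d, hddef⟩ : ∃ d : ℝ, ‖ω₂ - ω₁‖ = d := ⟨_, rfl⟩
  have hd0 : 0 ≤ d := hddef ▸ norm_nonneg _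
  have hd2 : d ^ 2 = 2 - 2 * c := by
    rw [← hddef, norm_sub_sq_real, real_inner_comm ω₁ ω₂, hcdef, h1, h2]
    ring
  obtain ⟨S, hSdef⟩ : ∃ S : ℝ, Real.sin (α / 2) = S := ⟨_, rfl⟩
  have hπ : (0:ℝ) < π := Real.pi_pos
  have hπ4 : π ≤ 4 := by linarith [Real.pi_le_four]
  have hS0 : 0 ≤ S := hSdef ▸ Real.sin_nonneg_of_nonneg_of_le_pi (by linarith) (by linarith)
  have hSsq : S ^ 2 = (1 - c) / 2 := by
    rw [← hSdef, Real.sin_sq_eq_half_sub]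
    rw [show 2 * (α / 2) = α by ring, hcos]
    ring
  have hdS : d = 2 * S := by
    have hsq : d ^ 2 = (2 * S) ^ 2 := by linear_combination hd2 - 4 * hSsq
    have h4 : (d - 2 * S) * (d + 2 * S) = 0 := by linear_combination hsq
    rcases mul_eq_zero.1 h4 with h5 | h5
    · linarith
    · linarith
  have hjordan : 2 / π * (α / 2) ≤ S := hSdef ▸ Real.mul_le_sin (by linarith) (by linarith)
  have hαd : α ≤ 2 * d := by
    have h6 := mul_le_mul_of_nonneg_left hjordan hπ.le
    rw [show π * (2 / π * (α / 2)) = α by field_simp] at h6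
    nlinarith
  rw [hddef]
  calc |ρ ω₂ - ρ ω₁| ≤ δ * α := key
    _ ≤ δ * (2 * d) := mul_le_mul_of_nonneg_left hαd hδ0
    _ = 2 * δ * d := by ring
lemma aux_t {s₁ s₂ t : ℝ} (htm : t * s₂ = s₁) (h1 : 98/100 ≤ s₁) (h2 : s₁ ≤ 102/100)
    (h3 : 98/100 ≤ s₂) (h4 : s₂ ≤ 102/100) : 96/100 ≤ t ∧ t ≤ 105/100 := by
  constructor <;> nlinarith

lemma aux_c {a b t c Z : ℝ} (ha1 : 99/100 < a) (ha2 : a < 101/100) (hb1 : 99/100 < b)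
    (hb2 : b < 101/100) (ht1 : 96/100 ≤ t) (ht2 : t ≤ 105/100) (hZ0 : 0 ≤ Z) (hZ : Z < 1/100)
    (hE : a^2 - 2*a*(t*b)*c + (t*b)^2 = (t-1)^2 * Z^2) : 0 < c := by
  have htb : 94/100 ≤ t * b := by nlinarith
  have hatb : 93/100 ≤ a * (t * b) := by nlinarith
  have hZsq : Z^2 ≤ (1/100)^2 := by nlinarith
  have htsq : (t-1)^2 ≤ (5/100)^2 := by nlinarith
  have h1 : a*(t*b)*(2 - 2*c) ≤ (t-1)^2 * Z^2 := by nlinarith [sq_nonneg (a - t*b)]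
  have h2 : (t-1)^2 * Z^2 ≤ (t-1)^2 * (1/100)^2 := mul_le_mul_of_nonneg_left hZsq (sq_nonneg _)
  nlinarith [h1, h2, htsq, hatb]

lemma aux_d {a b t c Z d s₂ : ℝ} (ha1 : 99/100 < a) (ha2 : a < 101/100) (hb1 : 99/100 < b)
    (hb2 : b < 101/100) (ht1 : 96/100 ≤ t) (ht2 : t ≤ 105/100) (hZ0 : 0 ≤ Z) (hZ : Z < 1/100)
    (hs3 : 98/100 ≤ s₂)
    (hE : a^2 - 2*a*(t*b)*c + (t*b)^2 = (t-1)^2 * Z^2)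
    (hd2 : d^2 = 2 - 2*c) (hd0 : 0 ≤ d)
    (hts : |t - 1| * s₂ ≤ 103/100 * d) : d = 0 := by
  have htb : 94/100 ≤ t * b := by nlinarith
  have hatb : 93/100 ≤ a * (t * b) := by nlinarith
  have hZsq : Z^2 ≤ (1/100)^2 := by nlinarith
  have hfund : (a - t*b)^2 + a*(t*b)*d^2 = (t-1)^2 * Z^2 := by
    linear_combination hE + (a*(t*b)) * hd2
  have h1 : a*(t*b)*d^2 ≤ (t-1)^2 * Z^2 := by nlinarith [sq_nonneg (a - t*b)]
  have h2 : (t-1)^2 * Z^2 ≤ (t-1)^2 * (1/100)^2 := mul_le_mul_of_nonneg_left hZsq (sq_nonneg _)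
  have h7 := mul_le_mul hts hts (by positivity) (by linarith : (0:ℝ) ≤ 103/100 * d)
  have hsq : (|t-1| * s₂) * (|t-1| * s₂) = (t-1)^2 * s₂^2 := by
    rw [show (|t-1| * s₂) * (|t-1| * s₂) = |t-1|^2 * s₂^2 from by ring, sq_abs]
  have hQ : (t-1)^2 * s₂^2 ≤ (103/100)^2 * d^2 := by
    calc (t-1)^2 * s₂^2 = (|t-1| * s₂) * (|t-1| * s₂) := hsq.symm
      _ ≤ (103/100 * d) * (103/100 * d) := h7
      _ = (103/100)^2 * d^2 := by ring
  have hs2sq : 9604/10000 ≤ s₂^2 := by nlinarith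
  have ht3 : (t-1)^2 * (9604/10000) ≤ (103/100)^2 * d^2 :=
    le_trans (mul_le_mul_of_nonneg_left hs2sq (sq_nonneg _)) hQ
  have hdz : d^2 ≤ 0 := by
    linarith [h1, h2, ht3,
      mul_nonneg (by linarith : (0:ℝ) ≤ a*(t*b) - 93/100) (sq_nonneg d)]
  have hd1 : d ^ 2 = 0 := le_antisymm hdz (sq_nonneg d)
  exact pow_eq_zero_iff (by norm_num : (2:ℕ) ≠ 0) |>.mp hd1

open Real Set in
open scoped RealInnerProductSpace in
/-- Injectivity of the angular reparametrization map
`f_z(ρ, ω) = ((1+ρ(ω))ω + z) / |(1+ρ(ω))ω + z|` on the unit sphere, for `ρ` of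
small `C¹` norm and small translations `z`. -/
theorem stmt_5 (n : ℕ) (hn : 2 ≤ n) :
    ∃ ε : ℝ, 0 < ε ∧ ∃ δ : ℝ, 0 < δ ∧
      ∀ ρ : EuclideanSpace ℝ (Fin n) → ℝ, ContDiff ℝ 1 ρ →
        (∀ ω ∈ Metric.sphere (0 : EuclideanSpace ℝ (Fin n)) 1,
          |ρ ω| + ‖fderiv ℝ ρ ω‖ < δ) →
        ∀ z : EuclideanSpace ℝ (Fin n), ‖z‖ < ε →
          Set.InjOn (fun ω => ‖(1 + ρ ω) • ω + z‖⁻¹ • ((1 + ρ ω) • ω + z))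
            (Metric.sphere (0 : EuclideanSpace ℝ (Fin n)) 1) := by
  refine ⟨1/100, by norm_num, 1/100, by norm_num, ?_⟩
  intro ρ hρ hsmall z hz ω₁ hm₁ ω₂ hm₂ heq
  have hω₁ : ‖ω₁‖ = 1 := mem_sphere_zero_iff_norm.mp hm₁
  have hω₂ : ‖ω₂‖ = 1 := mem_sphere_zero_iff_norm.mp hm₂
  have hδ' : ∀ ω : EuclideanSpace ℝ (Fin n), ‖ω‖ = 1 → ‖fderiv ℝ ρ ω‖ ≤ 1/100 := by
    intro ω hω
    have := hsmall ω (mem_sphere_zero_iff_norm.mpr hω)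
    have := abs_nonneg (ρ ω)
    linarith
  have hz0 : 0 ≤ ‖z‖ := norm_nonneg z
  obtain ⟨a, hadef⟩ : ∃ a : ℝ, 1 + ρ ω₁ = a := ⟨_, rfl⟩
  obtain ⟨b, hbdef⟩ : ∃ b : ℝ, 1 + ρ ω₂ = b := ⟨_, rfl⟩
  have hρ₁ := hsmall ω₁ hm₁
  have hρ₂ := hsmall ω₂ hm₂
  have hρ₁' : |ρ ω₁| < 1/100 := by have := norm_nonneg (fderiv ℝ ρ ω₁); linarith
  have hρ₂' : |ρ ω₂| < 1/100 := by have := norm_nonneg (fderiv ℝ ρ ω₂); linarith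
  rw [abs_lt] at hρ₁' hρ₂'
  have ha : 99/100 < a ∧ a < 101/100 := by constructor <;> [linarith [hadef]; linarith [hadef]]
  have hb : 99/100 < b ∧ b < 101/100 := by constructor <;> [linarith [hbdef]; linarith [hbdef]]
  obtain ⟨ha1, ha2⟩ := ha
  obtain ⟨hb1, hb2⟩ := hb
  obtain ⟨g₁, hg₁def⟩ : ∃ g : EuclideanSpace ℝ (Fin n), a • ω₁ + z = g := ⟨_, rfl⟩
  obtain ⟨g₂, hg₂def⟩ : ∃ g : EuclideanSpace ℝ (Fin n), b • ω₂ + z = g := ⟨_, rfl⟩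
  have hg₁n : ‖a • ω₁‖ = a := by rw [norm_smul, hω₁, Real.norm_eq_abs, abs_of_pos (by linarith)]; ring
  have hg₂n : ‖b • ω₂‖ = b := by rw [norm_smul, hω₂, Real.norm_eq_abs, abs_of_pos (by linarith)]; ring
  obtain ⟨s₁, hs₁def⟩ : ∃ s : ℝ, ‖g₁‖ = s := ⟨_, rfl⟩
  obtain ⟨s₂, hs₂def⟩ : ∃ s : ℝ, ‖g₂‖ = s := ⟨_, rfl⟩
  have hs₁lo : 98/100 ≤ s₁ := by
    have h := norm_add_le (a • ω₁ + z) (-z)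
    simp only [add_neg_cancel_right, norm_neg] at h
    rw [hg₁n, hg₁def, hs₁def] at h; linarith
  have hs₁hi : s₁ ≤ 102/100 := by
    have h := norm_add_le (a • ω₁) z
    rw [hg₁n, hg₁def, hs₁def] at h; linarith
  have hs₂lo : 98/100 ≤ s₂ := by
    have h := norm_add_le (b • ω₂ + z) (-z)
    simp only [add_neg_cancel_right, norm_neg] at h
    rw [hg₂n, hg₂def, hs₂def] at h; linarith
  have hs₂hi : s₂ ≤ 102/100 := by
    have h := norm_add_le (b • ω₂) z
    rw [hg₂n, hg₂def, hs₂def] at h; linarith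
  have hs₁0 : (0:ℝ) < s₁ := by linarith
  have hs₂0 : (0:ℝ) < s₂ := by linarith
  -- the hypothesis
  have heq' : s₁⁻¹ • g₁ = s₂⁻¹ • g₂ := by
    have h0 : ‖(1 + ρ ω₁) • ω₁ + z‖⁻¹ • ((1 + ρ ω₁) • ω₁ + z)
        = ‖(1 + ρ ω₂) • ω₂ + z‖⁻¹ • ((1 + ρ ω₂) • ω₂ + z) := heq
    rw [hadef, hbdef, hg₁def, hg₂def, hs₁def, hs₂def] at h0
    exact h0
  obtain ⟨t, htdef⟩ : ∃ t : ℝ, s₁ / s₂ = t := ⟨_, rfl⟩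
  have htm : t * s₂ = s₁ := by rw [← htdef]; field_simp
  have hg : g₁ = t • g₂ := by
    have h : s₁ • s₁⁻¹ • g₁ = s₁ • s₂⁻¹ • g₂ := by rw [heq']
    rw [smul_smul, smul_smul, mul_inv_cancel₀ hs₁0.ne', one_smul] at h
    rw [h, ← htdef, div_eq_mul_inv]
  obtain ⟨htlo, hthi⟩ := aux_t htm hs₁lo hs₁hi hs₂lo hs₂hi
  -- key vector identity
  have hkey : a • ω₁ - (t * b) • ω₂ = (t - 1) • z := by
    rw [← hg₁def, ← hg₂def] at hg
    linear_combination (norm := module) hg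
  obtain ⟨c, hcdef⟩ : ∃ c : ℝ, ⟪ω₁, ω₂⟫ = c := ⟨_, rfl⟩
  have hE : a^2 - 2*a*(t*b)*c + (t*b)^2 = (t-1)^2 * ‖z‖^2 := by
    have h := congrArg (fun x : EuclideanSpace ℝ (Fin n) => ‖x‖^2) hkey
    beta_reduce at h
    rw [norm_sub_sq_real, real_inner_smul_left, real_inner_smul_right, hcdef,
      norm_smul, norm_smul, norm_smul, hω₁, hω₂] at h
    simp only [Real.norm_eq_abs, mul_pow, sq_abs, mul_one] at h
    linear_combination h
  have hcle : c ≤ 1 := by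
    have := real_inner_le_norm ω₁ ω₂; rw [hω₁, hω₂, one_mul, hcdef] at this; exact this
  have hd2 : ‖ω₂ - ω₁‖^2 = 2 - 2*c := by
    rw [norm_sub_sq_real, real_inner_comm ω₁ ω₂, hcdef, hω₁, hω₂]; ring
  obtain ⟨d, hddef⟩ : ∃ d : ℝ, ‖ω₂ - ω₁‖ = d := ⟨_, rfl⟩
  rw [hddef] at hd2
  have hd0 : 0 ≤ d := hddef ▸ norm_nonneg _
  have hc : 0 < c := aux_c ha1 ha2 hb1 hb2 htlo hthi hz0 hz hE
  -- Lipschitz bound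
  have hlip : |ρ ω₂ - ρ ω₁| ≤ 2 * (1/100) * d := by
    have := sphere_lip hρ hδ' hω₁ hω₂ (hcdef ▸ hc)
    rw [hddef] at this; exact this
  -- refined bound on |s₁ - s₂|
  have habs : |s₁ - s₂| ≤ 103/100 * d := by
    have h3 : |s₁ - s₂| ≤ ‖g₁ - g₂‖ := by
      rw [← hs₁def, ← hs₂def]; exact abs_norm_sub_norm_le g₁ g₂
    have h4 : g₁ - g₂ = a • (ω₁ - ω₂) + (a - b) • ω₂ := by
      rw [← hg₁def, ← hg₂def]; module
    have h5 : ‖g₁ - g₂‖ ≤ a * d + |a - b| := by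
      rw [h4]
      calc ‖a • (ω₁ - ω₂) + (a - b) • ω₂‖ ≤ ‖a • (ω₁ - ω₂)‖ + ‖(a - b) • ω₂‖ := norm_add_le _ _
        _ = a * d + |a - b| := by
            rw [norm_smul, norm_smul, hω₂, norm_sub_rev, hddef, Real.norm_eq_abs,
              Real.norm_eq_abs, abs_of_pos (by linarith : (0:ℝ) < a)]
            ring
    have h6 : |a - b| = |ρ ω₂ - ρ ω₁| := by
      rw [show a - b = -(ρ ω₂ - ρ ω₁) from by linarith [hadef, hbdef], abs_neg]
    linarith [hlip, h3, h5, h6.le, h6.ge,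
      mul_le_mul_of_nonneg_right ha2.le hd0]
  -- conclude
  have hts : |t - 1| * s₂ ≤ 103/100 * d := by
    have e1 : (t - 1) * s₂ = s₁ - s₂ := by linear_combination htm
    have e2 : |t - 1| * s₂ = |s₁ - s₂| := by
      rw [← e1, abs_mul, abs_of_pos hs₂0]
    linarith [habs, e2]
  have hd' : d = 0 := aux_d ha1 ha2 hb1 hb2 htlo hthi hz0 hz hs₂lo hE hd2 hd0 hts
  exact (sub_eq_zero.mp (norm_eq_zero.mp (by rw [hddef]; exact hd'))).symm
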